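/- Let n m : ℕ, let K : Matrix (Fin n ⊕ Fin m) (Fin n ⊕ Fin m) ℝ be symmetric and positive definite, and let u : Fin n ⊕ Fin m → ℝ. Let K₁₁ : Matrix (Fin n) (Fin n) ℝ be the principal submatrix of K on the Fin n indices (K₁₁ i j = K (Sum.inl i) (Sum.inl j)) and u₁ : Fin n → ℝ the corresponding restriction of u (u₁ i = u (Sum.inl i)). Then u₁ ⬝ᵥ (K₁₁⁻¹ *ᵥ u₁) ≤ u ⬝ᵥ (K⁻¹ *ᵥ u). (Consequently, for a Gaussian-process posterior at a test point with prior variance k and covariance vector u to the conditioning points, conditioning on the additional m points never increases the posterior variance: k − u ⬝ᵥ K⁻¹ *ᵥ u ≤ k − u₁ ⬝ᵥ K₁₁⁻¹ *ᵥ u₁, i.e., σ_{t−1}^{N₂}(x) ≤ σ_{t−1}^{N₁}(x).) -/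

import Mathlib

open Matrix

theorem stmt_10 (n m : ℕ) (K : Matrix (Fin n ⊕ Fin m) (Fin n ⊕ Fin m) ℝ)
    (hsymm : K.IsSymm) (hpd : K.PosDef)
    (u : Fin n ⊕ Fin m → ℝ)
    (K₁₁ : Matrix (Fin n) (Fin n) ℝ)
    (hK₁₁ : ∀ i j, K₁₁ i j = K (Sum.inl i) (Sum.inl j))
    (u₁ : Fin n → ℝ) (hu₁ : ∀ i, u₁ i = u (Sum.inl i)) :
    u₁ ⬝ᵥ (K₁₁⁻¹ *ᵥ u₁) ≤ u ⬝ᵥ (K⁻¹ *ᵥ u) := by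
  classical
  -- extension by zero
  set e : (Fin n → ℝ) → (Fin n ⊕ Fin m → ℝ) := fun x => Sum.elim x 0 with he
  have hquad : ∀ x : Fin n → ℝ, x ⬝ᵥ (K₁₁ *ᵥ x) = (e x) ⬝ᵥ (K *ᵥ (e x)) := by
    intro x
    simp only [dotProduct, mulVec, he, Fintype.sum_sum_type, Sum.elim_inl, Sum.elim_inr,
      Pi.zero_apply, zero_mul, mul_zero, Finset.sum_const_zero, add_zero, hK₁₁]
  have hK₁₁pd : K₁₁.PosDef := by
    refine posDef_iff_dotProduct_mulVec.mpr ⟨?_, ?_⟩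
    · ext i j
      simp only [conjTranspose_apply, star_trivial]
      rw [hK₁₁, hK₁₁]
      exact hsymm.apply _ _
    · intro x hx
      have hex : e x ≠ 0 := by
        intro h
        apply hx
        funext i
        have := congrFun h (Sum.inl i)
        simpa [he] using this
      have := hpd.dotProduct_mulVec_pos hex
      simpa [hquad x] using this
  have hKunit : IsUnit K.det := isUnit_iff_isUnit_det _ |>.1 hpd.isUnit
  have hK₁₁unit : IsUnit K₁₁.det := isUnit_iff_isUnit_det _ |>.1 hK₁₁pd.isUnit
  set v : Fin n ⊕ Fin m → ℝ := e (K₁₁⁻¹ *ᵥ u₁) with hv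
  set z : Fin n ⊕ Fin m → ℝ := K⁻¹ *ᵥ u with hz
  have hKz : K *ᵥ z = u := by
    rw [hz, mulVec_mulVec, mul_nonsing_inv _ hKunit, one_mulVec]
  -- u ⬝ v = u₁ ⬝ K₁₁⁻¹ u₁
  have huv : u ⬝ᵥ v = u₁ ⬝ᵥ (K₁₁⁻¹ *ᵥ u₁) := by
    simp only [dotProduct, hv, he, Fintype.sum_sum_type, Sum.elim_inl, Sum.elim_inr,
      Pi.zero_apply, mul_zero, Finset.sum_const_zero, add_zero]
    exact Finset.sum_congr rfl fun i _ => by rw [hu₁]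
  -- v ⬝ K v = u₁ ⬝ K₁₁⁻¹ u₁
  have hvKv : v ⬝ᵥ (K *ᵥ v) = u₁ ⬝ᵥ (K₁₁⁻¹ *ᵥ u₁) := by
    rw [hv, ← hquad, mulVec_mulVec, mul_nonsing_inv _ hK₁₁unit, one_mulVec, dotProduct_comm]
  -- symmetry facts
  have hsymm' : Kᵀ = K := hsymm
  have hzKv : z ⬝ᵥ (K *ᵥ v) = u ⬝ᵥ v := by
    rw [dotProduct_mulVec, ← mulVec_transpose, hsymm', hKz]
  have hvKz : v ⬝ᵥ (K *ᵥ z) = u ⬝ᵥ v := by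
    rw [hKz, dotProduct_comm]
  have hzKz : z ⬝ᵥ (K *ᵥ z) = u ⬝ᵥ z := by
    rw [hKz, dotProduct_comm]
  have hw : (v - z) ⬝ᵥ (K *ᵥ (v - z)) =
      v ⬝ᵥ (K *ᵥ v) - 2 * (u ⬝ᵥ v) + u ⬝ᵥ z := by
    rw [sub_dotProduct, mulVec_sub, dotProduct_sub, dotProduct_sub,
      hzKv, hvKz, hzKz]
    ring
  have hwnn : 0 ≤ (v - z) ⬝ᵥ (K *ᵥ (v - z)) := by
    have := hpd.posSemidef.dotProduct_mulVec_nonneg (v - z)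
    simpa using this
  have key : u₁ ⬝ᵥ (K₁₁⁻¹ *ᵥ u₁) ≤ u ⬝ᵥ z := by
    nlinarith [hwnn, hw, huv, hvKv]
  calc u₁ ⬝ᵥ (K₁₁⁻¹ *ᵥ u₁) ≤ u ⬝ᵥ z := key
    _ = u ⬝ᵥ (K⁻¹ *ᵥ u) := by rw [hz]
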